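/- Fix a ∈ ℝ, b, c ∈ ℂ with c ≠ 0, and E ∈ ℝ. Then every solution ψ of the half-line eigenvalue equation (not assumed ℓ²) is determined as follows: there exist complex numbers z, w such that ψ(1) = z·(c̄, −(a − E), b, 0) + w·(0, −b̄, −(a + E), c̄), and ψ(n+1) = R·ψ(n) for every n ≥ 1, where R is the 4×4 complex matrix R = [[c, −(a+E), b̄, 0], [−c(a−E)/c̄, (a² + |b|² + 1 − E²)/c̄, 0, −b̄c/c̄], [bc/c̄, 0, (a² + |b|² + 1 − E²)/c̄, −(a+E)c/c̄], [0, −b, −(a−E), c]]. -/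

import Mathlib

noncomputable section

open scoped ComplexConjugate

/-- The on-site matrix `V` of the local model. -/
def Vmat (a : ℝ) (b c : ℂ) : Matrix (Fin 4) (Fin 4) ℂ :=
  !![(a : ℂ), conj c, 0, conj b;
     c, -(a : ℂ), conj b, 0;
     0, b, (a : ℂ), -c;
     b, 0, -(conj c), -(a : ℂ)]

/-- The hopping matrix `A` of the local model. -/
def Amat : Matrix (Fin 4) (Fin 4) ℂ :=
  !![0, -1, 0, 0;
     0, 0, 0, 0;
     0, 0, 0, 0;
     0, 0, 1, 0]

/-- `ψ : ℕ → (Fin 4 → ℂ)` (with `ψ n` standing for the value at the site `n + 1` of the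
half-line `{1, 2, 3, …}`) solves the half-line eigenvalue equation `(H♯ − E)ψ = 0`:
`(V − E·I)ψ(1) + A*ψ(2) = 0` and `Aψ(n) + (V − E·I)ψ(n+1) + A*ψ(n+2) = 0` for all `n ≥ 1`. -/
def IsSolSeq (a : ℝ) (b c : ℂ) (E : ℝ) (ψ : ℕ → Fin 4 → ℂ) : Prop :=
  (Vmat a b c - (E : ℂ) • 1).mulVec (ψ 0) + (Amat.conjTranspose).mulVec (ψ 1) = 0 ∧
    ∀ n : ℕ,
      Amat.mulVec (ψ n) + (Vmat a b c - (E : ℂ) • 1).mulVec (ψ (n + 1)) +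
        (Amat.conjTranspose).mulVec (ψ (n + 2)) = 0

/-- The `ℓ²` condition: `∑_{n ≥ 1} ‖ψ(n)‖² < ∞`. -/
def IsL2Seq (ψ : ℕ → Fin 4 → ℂ) : Prop :=
  Summable fun n => ∑ i, ‖ψ n i‖ ^ 2

/-- The space `Sol(a, b, c, E)` of `ℓ²`-solutions of the half-line eigenvalue equation. -/
def Sol (a : ℝ) (b c : ℂ) (E : ℝ) : Set (ℕ → Fin 4 → ℂ) :=
  {ψ | IsSolSeq a b c E ψ ∧ IsL2Seq ψ}

/-- The sequence `e₁` with `e₁(n) = (c^{n−1}, 0, 0, 0)` (convention `0⁰ = 1`). -/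
def eSeq₁ (c : ℂ) : ℕ → Fin 4 → ℂ := fun n => ![c ^ n, 0, 0, 0]

/-- The sequence `e₄` with `e₄(n) = (0, 0, 0, c^{n−1})` (convention `0⁰ = 1`). -/
def eSeq₄ (c : ℂ) : ℕ → Fin 4 → ℂ := fun n => ![0, 0, 0, c ^ n]

/-- The transfer matrix `R` of the local model (for `c ≠ 0`). -/
def Rmat (a : ℝ) (b c : ℂ) (E : ℝ) : Matrix (Fin 4) (Fin 4) ℂ :=
  !![c, -((a : ℂ) + (E : ℂ)), conj b, 0;
     -(c * ((a : ℂ) - (E : ℂ))) / conj c,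
       ((a ^ 2 + ‖b‖ ^ 2 + 1 - E ^ 2 : ℝ) : ℂ) / conj c, 0, -(conj b * c) / conj c;
     b * c / conj c, 0, ((a ^ 2 + ‖b‖ ^ 2 + 1 - E ^ 2 : ℝ) : ℂ) / conj c,
       -(((a : ℂ) + (E : ℂ)) * c) / conj c;
     0, -b, -((a : ℂ) - (E : ℂ)), c]

/-- Fix `a ∈ ℝ`, `b, c ∈ ℂ` with `c ≠ 0`, and `E ∈ ℝ`. Then every solution `ψ` of the
half-line eigenvalue equation (not assumed ℓ²) is determined as follows: there exist complex
numbers `z, w` such that `ψ(1) = z·(c̄, −(a−E), b, 0) + w·(0, −b̄, −(a+E), c̄)`, and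
`ψ(n+1) = R·ψ(n)` for every `n ≥ 1`. -/
lemma hAT : Amat.conjTranspose = !![0,0,0,0; -1,0,0,0; 0,0,0,1; 0,0,0,0] := by
  ext i j
  fin_cases i <;> fin_cases j <;>
    simp [Amat, Matrix.conjTranspose_apply, Matrix.vecHead, Matrix.vecTail]

theorem stmt9 (a : ℝ) (b c : ℂ) (hc : c ≠ 0) (E : ℝ)
    (ψ : ℕ → Fin 4 → ℂ) (hψ : IsSolSeq a b c E ψ) :
    ∃ z w : ℂ,
      ψ 0 = z • ![conj c, -((a : ℂ) - (E : ℂ)), b, 0] +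
          w • ![0, -(conj b), -((a : ℂ) + (E : ℂ)), conj c] ∧
      ∀ n : ℕ, ψ (n + 1) = (Rmat a b c E).mulVec (ψ n) := by
  obtain ⟨h0, hrec⟩ := hψ
  rw [hAT] at h0
  have hcc : (conj c : ℂ) ≠ 0 := by simpa using hc
  have hb : ((‖b‖ ^ 2 : ℝ) : ℂ) = b * conj b := by
    rw [Complex.sq_norm]
    push_cast
    rw [Complex.mul_conj]
  have hb2 : ((‖b‖ : ℝ) : ℂ) ^ 2 = b * conj b := by
    rw [← Complex.ofReal_pow, Complex.sq_norm]
    exact (Complex.mul_conj b).symm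
  have hK : ((a ^ 2 + ‖b‖ ^ 2 + 1 - E ^ 2 : ℝ) : ℂ)
      = (a:ℂ)^2 + b * conj b + 1 - (E:ℂ)^2 := by
    push_cast [← hb]; ring
  have b0 := congrFun h0 0
  have b1 := congrFun h0 1
  have b2 := congrFun h0 2
  have b3 := congrFun h0 3
  simp [Vmat, Matrix.mulVec, dotProduct, Fin.sum_univ_four, Matrix.vecHead,
    Matrix.vecTail, Matrix.sub_apply, Matrix.smul_apply, Matrix.one_apply,
    Fin.succ] at b0 b1 b2 b3
  have R0 : ∀ n, -ψ n 1 + (((a:ℂ) - E) * ψ (n+1) 0 + conj c * ψ (n+1) 1 + conj b * ψ (n+1) 3) = 0 := by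
    intro n
    have h := congrFun (hrec n) 0
    rw [hAT] at h
    simp [Vmat, Amat, Matrix.mulVec, dotProduct, Fin.sum_univ_four, Matrix.vecHead,
      Matrix.vecTail, Matrix.sub_apply, Matrix.smul_apply, Matrix.one_apply, Fin.succ] at h
    linear_combination h
  have R1 : ∀ n, c * ψ (n+1) 0 + (-(a:ℂ) - E) * ψ (n+1) 1 + conj b * ψ (n+1) 2 - ψ (n+1+1) 0 = 0 := by
    intro n
    have h := congrFun (hrec n) 1
    rw [hAT] at h
    simp [Vmat, Amat, Matrix.mulVec, dotProduct, Fin.sum_univ_four, Matrix.vecHead,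
      Matrix.vecTail, Matrix.sub_apply, Matrix.smul_apply, Matrix.one_apply, Fin.succ] at h
    norm_num at h ⊢
    linear_combination h
  have R2 : ∀ n, b * ψ (n+1) 1 + ((a:ℂ) - E) * ψ (n+1) 2 - c * ψ (n+1) 3 + ψ (n+1+1) 3 = 0 := by
    intro n
    have h := congrFun (hrec n) 2
    rw [hAT] at h
    simp [Vmat, Amat, Matrix.mulVec, dotProduct, Fin.sum_univ_four, Matrix.vecHead,
      Matrix.vecTail, Matrix.sub_apply, Matrix.smul_apply, Matrix.one_apply, Fin.succ] at h
    norm_num at h ⊢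
    linear_combination h
  have R3 : ∀ n, ψ n 2 + (b * ψ (n+1) 0 - conj c * ψ (n+1) 2 + (-(a:ℂ) - E) * ψ (n+1) 3) = 0 := by
    intro n
    have h := congrFun (hrec n) 3
    rw [hAT] at h
    simp [Vmat, Amat, Matrix.mulVec, dotProduct, Fin.sum_univ_four, Matrix.vecHead,
      Matrix.vecTail, Matrix.sub_apply, Matrix.smul_apply, Matrix.one_apply, Fin.succ] at h
    linear_combination h
  have hA : ∀ n, ψ (n+1) 0 = c * ψ n 0 - ((a:ℂ) + E) * ψ n 1 + conj b * ψ n 2 := by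
    intro n
    cases n with
    | zero => norm_num; linear_combination -b1
    | succ m => linear_combination -(R1 m)
  have hD : ∀ n, ψ (n+1) 3 = -(b * ψ n 1) - ((a:ℂ) - E) * ψ n 2 + c * ψ n 3 := by
    intro n
    cases n with
    | zero => norm_num; linear_combination b2
    | succ m => linear_combination R2 m
  refine ⟨ψ 0 0 / conj c, ψ 0 3 / conj c, ?_, ?_⟩
  · funext i
    fin_cases i <;>
      simp [Matrix.cons_val_zero, Matrix.cons_val_one, Matrix.vecHead, Matrix.vecTail] <;>
      field_simp
    · linear_combination b0
    · linear_combination -b3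
  · intro n
    funext i
    have hA' := hA n
    have hD' := hD n
    fin_cases i <;>
      simp [Rmat, hK, Matrix.mulVec, dotProduct, Fin.sum_univ_four, Matrix.vecHead,
        Matrix.vecTail]
    · linear_combination hA'
    · have key : conj c * ψ (n+1) 1
          = -(c*((a:ℂ)-E)) * ψ n 0 + ((a:ℂ)^2 + b*conj b + 1 - (E:ℂ)^2) * ψ n 1
            - conj b * c * ψ n 3 := by
        linear_combination (R0 n) + (-((a:ℂ)-E)) * hA' + (-(conj b)) * hD'
      field_simp
      linear_combination key
    · have key : conj c * ψ (n+1) 2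
          = b * c * ψ n 0 + ((a:ℂ)^2 + b*conj b + 1 - (E:ℂ)^2) * ψ n 2
            - ((a:ℂ)+E) * c * ψ n 3 := by
        linear_combination -(R3 n) + b * hA' + (-((a:ℂ)+E)) * hD'
      field_simp
      linear_combination key
    · linear_combination hD'
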